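/- On the dyadic group G = ∏_{j=0}^∞ ℤ/2ℤ, for x with x_0 = x_1 = 1 and integers α ≥ 2 and j with 2^{2α} ≤ j ≤ 2^{2α+1}−1, the absolute value of ∑_{n=2^{2α-1}}^{(j-1)/2} w_{2n}(x)/(2n+1) is at least 1/j − ∑_{n=2^{2α-2}+1}^{⌊(j-1)/4⌋} (1/(4n-3) − 1/(4n-1)), provided j is odd with j ≡ 5 (mod 8) (so that the pairing w_{4n-2}(x) = −w_{4n-4}(x) applies and the last term is isolated). -/

import Mathlib

open Finset

noncomputable def walsh (m : ℕ) (x : ℕ → ZMod 2) : ℝ :=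
  (-1 : ℝ) ^ (∑ k ∈ Finset.range m, if m.testBit k then (x k).val else 0)

noncomputable def walshDirichlet (m : ℕ) (x : ℕ → ZMod 2) : ℝ :=
  ∑ v ∈ Finset.range m, walsh v x

lemma walsh_abs (m : ℕ) (x : ℕ → ZMod 2) : |walsh m x| = 1 := by
  unfold walsh
  rw [abs_pow, abs_neg, abs_one, one_pow]

lemma walsh_exp_ext (x : ℕ → ZMod 2) (m K : ℕ) (h : m ≤ K) :
    (∑ k ∈ Finset.range m, if m.testBit k then (x k).val else 0)
      = ∑ k ∈ Finset.range K, if m.testBit k then (x k).val else 0 := by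
  apply Finset.sum_subset (Finset.range_subset_range.2 h)
  intro k _ hk
  have hk' : m ≤ k := by simpa using hk
  have hlt : m < 2 ^ k := lt_of_le_of_lt hk' (Nat.lt_two_pow_self (n := k))
  simp [Nat.testBit_lt_two_pow hlt]

lemma testBit_aux (m k : ℕ) (h2 : 2 ≤ k) : (4*m+2).testBit k = (4*m).testBit k := by
  obtain ⟨s, rfl⟩ : ∃ s, k = s + 2 := ⟨k - 2, by omega⟩
  rw [Nat.testBit_eq_decide_div_mod_eq, Nat.testBit_eq_decide_div_mod_eq,
    show (2:ℕ)^(s+2) = 4 * 2^s from by ring,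
    show (4*m+2) / (4 * 2^s) = (4*m+2) / 4 / 2^s from (Nat.div_div_eq_div_mul _ _ _).symm,
    show (4*m) / (4 * 2^s) = (4*m) / 4 / 2^s from (Nat.div_div_eq_div_mul _ _ _).symm,
    show (4*m+2)/4 = m from by omega, show (4*m)/4 = m from by omega]

lemma walsh_four (x : ℕ → ZMod 2) (hx1 : x 1 = 1) (m : ℕ) :
    walsh (4*m+2) x = - walsh (4*m) x := by
  unfold walsh
  rw [walsh_exp_ext x (4*m) (4*m+2) (by omega)]
  have key : (∑ k ∈ Finset.range (4*m+2), if (4*m+2).testBit k then (x k).val else 0)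
      = (∑ k ∈ Finset.range (4*m+2), if (4*m).testBit k then (x k).val else 0) + 1 := by
    have hpt : ∀ k ∈ Finset.range (4*m+2),
        (if (4*m+2).testBit k then (x k).val else 0)
          = (if (4*m).testBit k then (x k).val else 0) + (if k = 1 then 1 else 0) := by
      intro k _
      by_cases hk1 : k = 1
      · subst hk1
        have t1 : (4*m+2).testBit 1 = true := by
          rw [Nat.testBit_eq_decide_div_mod_eq]; simp; omega
        have t0 : (4*m).testBit 1 = false := by
          rw [Nat.testBit_eq_decide_div_mod_eq]; simp; omega
        rw [t1, t0, hx1]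
        simp [ZMod.val_one]
      · by_cases hk0 : k = 0
        · subst hk0
          have t1 : (4*m+2).testBit 0 = false := by
            rw [Nat.testBit_eq_decide_div_mod_eq]; simp; omega
          have t0 : (4*m).testBit 0 = false := by
            rw [Nat.testBit_eq_decide_div_mod_eq]; simp; omega
          simp [t1, t0]
        · rw [testBit_aux m k (by omega)]
          simp [hk1]
    rw [Finset.sum_congr rfl hpt, Finset.sum_add_distrib]
    congr 1
    rw [Finset.sum_ite_eq' (Finset.range (4*m+2)) 1 (fun _ => 1)]
    simp
  rw [key, pow_succ]
  ring

lemma pair_sum (g : ℕ → ℝ) (b : ℕ) : ∀ c : ℕ,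
    ∑ n ∈ Icc (2*b) (2*c+1), g n = ∑ m ∈ Icc b c, (g (2*m) + g (2*m+1)) := by
  intro c
  induction c with
  | zero =>
    by_cases hb : b = 0
    · subst hb
      rw [show 2*0+1 = 0+1 from rfl, Finset.sum_Icc_succ_top (by omega)]
      simp
    · rw [Finset.Icc_eq_empty (by omega), Finset.Icc_eq_empty (by omega)]
      simp
  | succ c ih =>
    by_cases hb : b ≤ c + 1
    · rw [show 2*(c+1)+1 = (2*c+2)+1 from by ring, Finset.sum_Icc_succ_top (by omega),
        show 2*c+2 = (2*c+1)+1 from rfl, Finset.sum_Icc_succ_top (by omega), ih,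
        Finset.sum_Icc_succ_top hb]
      rw [show 2*(c+1) = 2*c+1+1 from by ring]
      ring
    · rw [Finset.Icc_eq_empty (by omega), Finset.Icc_eq_empty (by omega)]
      simp

/-- For `x` with `x_0 = x_1 = 1`, `α ≥ 2` and `2^{2α} ≤ j ≤ 2^{2α+1}-1`
with `j ≡ 5 (mod 8)`, the absolute value of `∑_{n=2^{2α-1}}^{(j-1)/2} w_{2n}(x)/(2n+1)`
is at least `1/j − ∑_{n=2^{2α-2}+1}^{⌊(j-1)/4⌋} (1/(4n-3) − 1/(4n-1))`. -/
theorem stmt_16 (x : ℕ → ZMod 2) (hx0 : x 0 = 1) (hx1 : x 1 = 1)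
    (α j : ℕ) (hα : 2 ≤ α) (hj1 : 2 ^ (2 * α) ≤ j) (hj2 : j ≤ 2 ^ (2 * α + 1) - 1)
    (hj5 : j % 8 = 5) :
    (1 : ℝ) / j
        - ∑ n ∈ Finset.Icc (2 ^ (2 * α - 2) + 1) ((j - 1) / 4),
            ((1 : ℝ) / (4 * (n : ℝ) - 3) - 1 / (4 * (n : ℝ) - 1))
      ≤ |∑ n ∈ Finset.Icc (2 ^ (2 * α - 1)) ((j - 1) / 2),
            walsh (2 * n) x / (2 * (n : ℝ) + 1)| := by
  obtain ⟨K, rfl⟩ : ∃ K, j = 8*K+5 := ⟨j/8, by omega⟩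
  obtain ⟨B, hB1, hB2, hB3⟩ : ∃ B, 2*α-2 = B ∧ 2*α-1 = B+1 ∧ 2*α = B+2 :=
    ⟨2*α-2, rfl, by omega, by omega⟩
  rw [hB1, hB2]
  rw [hB3] at hj1
  set b : ℕ := 2^B with hb
  have e1 : 2^(B+1) = 2*b := by rw [hb]; ring
  have e2 : (2:ℕ)^(B+2) = 4*b := by rw [hb]; ring
  rw [e2] at hj1
  rw [e1]
  have hbK : 2*b ≤ 4*K + 2 := by omega
  rw [show (8*K+5-1)/2 = 4*K+2 from by omega, show (8*K+5-1)/4 = 2*K+1 from by omega]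
  set g : ℕ → ℝ := fun n => walsh (2 * n) x / (2 * (n : ℝ) + 1) with hg
  have hsplit : ∑ n ∈ Icc (2*b) (4*K+2), g n
      = (∑ m ∈ Icc b (2*K), (g (2*m) + g (2*m+1))) + g (4*K+2) := by
    rw [show 4*K+2 = (4*K+1)+1 from by omega, Finset.sum_Icc_succ_top (by omega),
      show 4*K+1 = 2*(2*K)+1 from by ring, pair_sum g b (2*K)]
  have habsg : |g (4*K+2)| = 1/((8*K+5 : ℕ) : ℝ) := by
    have hden : (2*((4*K+2 : ℕ):ℝ)+1) = ((8*K+5 : ℕ):ℝ) := by push_cast; ring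
    rw [hg]
    simp only []
    rw [abs_div, walsh_abs, hden, abs_of_pos (by positivity)]
  have hpairbound : ∀ m ∈ Icc b (2*K),
      |g (2*m) + g (2*m+1)| = 1/(4*(m:ℝ)+1) - 1/(4*(m:ℝ)+3) := by
    intro m _
    have h1 : g (2*m) = walsh (4*m) x / (4*(m:ℝ)+1) := by
      rw [hg]
      simp only []
      rw [show 2*(2*m) = 4*m from by ring]
      push_cast; ring_nf
    have h2 : g (2*m+1) = - walsh (4*m) x / (4*(m:ℝ)+3) := by
      rw [hg]
      simp only []
      rw [show 2*(2*m+1) = 4*m+2 from by ring, walsh_four x hx1 m]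
      push_cast; ring_nf
    have hne1 : (4*(m:ℝ)+1) ≠ 0 := by positivity
    have hne3 : (4*(m:ℝ)+3) ≠ 0 := by positivity
    have hmul : walsh (4*m) x / (4*(m:ℝ)+1) + - walsh (4*m) x / (4*(m:ℝ)+3)
        = walsh (4*m) x * (1/(4*(m:ℝ)+1) - 1/(4*(m:ℝ)+3)) := by
      field_simp; ring
    rw [h1, h2, hmul, abs_mul, walsh_abs, one_mul, abs_of_nonneg]
    rw [sub_nonneg]
    apply one_div_le_one_div_of_le (by positivity)
    linarith
  have hS : ∑ n ∈ Icc (b+1) (2*K+1), ((1:ℝ)/(4*(n:ℝ)-3) - 1/(4*(n:ℝ)-1))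
      = ∑ m ∈ Icc b (2*K), ((1:ℝ)/(4*(m:ℝ)+1) - 1/(4*(m:ℝ)+3)) := by
    rw [← Finset.map_add_right_Icc b (2*K) 1, Finset.sum_map]
    apply Finset.sum_congr rfl
    intro m _
    simp only [addRightEmbedding_apply]
    push_cast
    ring_nf
  rw [hsplit, hS]
  set P := ∑ m ∈ Icc b (2*K), (g (2*m) + g (2*m+1)) with hP
  have hPbound : |P| ≤ ∑ m ∈ Icc b (2*K), ((1:ℝ)/(4*(m:ℝ)+1) - 1/(4*(m:ℝ)+3)) := by
    refine (Finset.abs_sum_le_sum_abs _ _).trans ?_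
    exact Finset.sum_le_sum fun m hm => le_of_eq (hpairbound m hm)
  have h2 : |g (4*K+2)| - |P| ≤ |P + g (4*K+2)| := by
    have h := abs_sub_abs_le_abs_sub (g (4*K+2)) (-P)
    rwa [abs_neg, sub_neg_eq_add, add_comm (g (4*K+2)) P] at h
  rw [habsg] at h2
  linarith
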